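/- Let D be a directed acyclic graph with s, t ∈ V(D), and let G be the directed bipartite graph with vertex set {v_L, v_R : v ∈ V(D)} and edges u_L→v_R and u_R→v_L for each edge u→v of D. Let x : E(D) → ℝ with x ≥ 0 satisfy Σ_{e ∈ P} x(e) ≥ 1 for every odd-length s→t path P in D. Define Y : E(G) → ℝ by Y(u_L v_R) = Y(u_R v_L) = x(uv) for every edge uv ∈ E(D). Then Σ_{e ∈ Q} Y(e) ≥ 1 for every directed s_L→t_R path Q in G. -/

import Mathlib

/-- A (simple) directed path in the directed graph `G`, represented as a nonempty
list of pairwise distinct vertices in which every consecutive pair is an edge of `G`. -/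
def IsPath {V : Type*} (G : V → V → Prop) (p : List V) : Prop :=
  p ≠ [] ∧ p.Chain' G ∧ p.Nodup

/-- `p` is a directed path from `u` to `v` in `G`. -/
def IsPathFrom {V : Type*} (G : V → V → Prop) (u v : V) (p : List V) : Prop :=
  IsPath G p ∧ p.head? = some u ∧ p.getLast? = some v

/-- The length (number of edges) of a path, given as its list of vertices. -/
def pathLen {V : Type*} (p : List V) : ℕ := p.length - 1

/-- The list of directed edges traversed by a path. -/
def edgesOf {V : Type*} (p : List V) : List (V × V) := p.zip p.tail

/-- A directed graph is acyclic (a DAG) if no vertex lies on a directed cycle. -/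
def Acyclic {V : Type*} (G : V → V → Prop) : Prop :=
  ∀ v, ¬ Relation.TransGen G v v

/-- The graph obtained from `G` by deleting the vertex set `M`. -/
def delV {V : Type*} (G : V → V → Prop) (M : Set V) : V → V → Prop :=
  fun a b => G a b ∧ a ∉ M ∧ b ∉ M

/-- The bipartite double cover of a directed graph `D`: vertices `Sum.inl v`
(playing the role of `v_L`) and `Sum.inr v` (playing the role of `v_R`), with
edges `u_L → v_R` and `u_R → v_L` for every edge `u → v` of `D`. -/
def biparLift {V : Type*} (D : V → V → Prop) : V ⊕ V → V ⊕ V → Prop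
  | Sum.inl u, Sum.inr v => D u v
  | Sum.inr u, Sum.inl v => D u v
  | _, _ => False

-- edges are in relation
lemma mem_edgesOf {α : Type*} {R : α → α → Prop} :
    ∀ (q : List α), q.Chain' R → ∀ a b, (a, b) ∈ edgesOf q → R a b := by
  intro q
  induction q with
  | nil => intro _ a b h; simp [edgesOf] at h
  | cons x l ih =>
    cases l with
    | nil => intro _ a b h; simp [edgesOf] at h
    | cons y l' =>
      intro hc a b h
      rw [List.Chain', List.isChain_cons_cons] at hc
      simp only [edgesOf, List.tail_cons, List.zip_cons_cons, List.mem_cons] at h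
      rcases h with h | h
      · obtain ⟨rfl, rfl⟩ : a = x ∧ b = y := by simpa using h
        exact hc.1
      · exact ih hc.2 a b h

lemma edgesOf_map {α β : Type*} (f : α → β) (q : List α) :
    edgesOf (q.map f) = (edgesOf q).map (Prod.map f f) := by
  simp only [edgesOf]
  rw [← List.map_tail, List.zip_map]

lemma parity_lemma {V : Type*} {D : V → V → Prop} :
    ∀ (q : List (V ⊕ V)), q.Chain' (biparLift D) → ∀ a b,
      q.head? = some a → q.getLast? = some b →
      (a.isLeft = b.isLeft ↔ Even (pathLen q)) := by
  intro q
  induction q with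
  | nil => intro _ a b h; simp at h
  | cons x l ih =>
    cases l with
    | nil =>
      intro _ a b ha hb
      simp at ha hb
      subst ha; subst hb
      simp [pathLen]
    | cons y l' =>
      intro hc a b ha hb
      rw [List.Chain', List.isChain_cons_cons] at hc
      simp only [List.head?_cons, Option.some.injEq] at ha
      obtain rfl := ha
      have hb' : (y :: l').getLast? = some b := by
        rw [List.getLast?_cons_cons] at hb; exact hb
      have := ih hc.2 y b rfl hb'
      have hflip : x.isLeft = !y.isLeft := by
        have h1 := hc.1
        rcases x with u | u <;> rcases y with v | v <;> simp [biparLift] at h1 ⊢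
      have hlen : pathLen (x :: y :: l') = pathLen (y :: l') + 1 := by
        simp [pathLen]
      rw [hlen, hflip, Nat.even_add_one, ← this]
      cases y.isLeft <;> cases b.isLeft <;> simp


/-- **(Feasibility of the lifted fractional solution, Claim 3.5.)**
Let `D` be a DAG with `s, t ∈ V(D)` and let `G = biparLift D` be its bipartite
double cover.  Let `x : E(D) → ℝ` be nonnegative with `∑_{e ∈ P} x(e) ≥ 1` for
every odd-length `s → t` path `P` of `D`, and define `Y : E(G) → ℝ` by
`Y(u_L v_R) = Y(u_R v_L) = x(uv)`.  Then `∑_{e ∈ Q} Y(e) ≥ 1` for every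
directed `s_L → t_R` path `Q` of `G`. -/
theorem lifted_fractional_solution_feasible {V : Type*} (D : V → V → Prop)
    (hD : Acyclic D) (s t : V)
    (x : V × V → ℝ) (hx0 : ∀ e, 0 ≤ x e)
    (hx : ∀ p, IsPathFrom D s t p → Odd (pathLen p) →
      1 ≤ ((edgesOf p).map x).sum)
    (Y : (V ⊕ V) × (V ⊕ V) → ℝ)
    (hY : ∀ u v, D u v → Y (Sum.inl u, Sum.inr v) = x (u, v) ∧
      Y (Sum.inr u, Sum.inl v) = x (u, v)) :
    ∀ q, IsPathFrom (biparLift D) (Sum.inl s) (Sum.inr t) q →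
      1 ≤ ((edgesOf q).map Y).sum := by
  intro q hq
  obtain ⟨⟨hne, hch, _⟩, hhead, hlast⟩ := hq
  set proj : V ⊕ V → V := Sum.elim id id with hproj
  set p : List V := q.map proj with hp
  have hchp : p.Chain' D := by
    rw [hp, List.Chain', List.isChain_map]
    refine hch.imp ?_
    rintro (a | a) (b | b) h <;> simp [biparLift] at h <;> simpa [hproj] using h
  have hheadp : p.head? = some s := by
    rw [hp, List.head?_map, hhead]; rfl
  have hlastp : p.getLast? = some t := by
    rw [hp, List.getLast?_map, hlast]; rfl
  have hnep : p ≠ [] := by simpa [hp] using hne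
  have hnodup : p.Nodup := by
    have h1 : p.Chain' (Relation.TransGen D) := hchp.imp fun {a b} h => Relation.TransGen.single h
    have h2 : p.Pairwise (Relation.TransGen D) := List.isChain_iff_pairwise.mp h1
    refine h2.imp ?_
    intro a b h heq
    exact hD a (heq ▸ h)
  have hlen : pathLen p = pathLen q := by simp [hp, pathLen]
  have hodd : Odd (pathLen p) := by
    have := parity_lemma q hch (Sum.inl s) (Sum.inr t) hhead hlast
    simp only [Sum.isLeft_inl, Sum.isLeft_inr] at this
    rw [hlen, ← Nat.not_even_iff_odd, ← this]
    simp
  have hsum : ((edgesOf p).map x).sum = ((edgesOf q).map Y).sum := by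
    rw [hp, edgesOf_map, List.map_map]
    apply congrArg
    apply List.map_congr_left
    rintro ⟨a, b⟩ hmem
    have hab := mem_edgesOf q hch a b hmem
    rcases a with u | u <;> rcases b with v | v <;> simp [biparLift] at hab
    · simp [hproj, Function.comp, (hY u v hab).1]
    · simp [hproj, Function.comp, (hY u v hab).2]
  rw [← hsum]
  exact hx p ⟨⟨hnep, hchp, hnodup⟩, hheadp, hlastp⟩ hodd
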